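/- Let η_1, η_2, η_3, ... be independent identically distributed real-valued random variables with η_1 ∈ L². Then for any δ > 0 and m ∈ ℕ, ℙ( sup_{n ≥ m} | (Σ_{k=1}^n η_k)/n − 𝔼 η_1 | > δ ) ≤ 4 Var(η_1) / (δ² m). -/

import Mathlib

open MeasureTheory ProbabilityTheory Filter

/-- Maximal-type weak law estimate: for i.i.d. `η_k ∈ L²`, any `δ > 0` and `m ≥ 1`,
`ℙ( sup_{n ≥ m} |(Σ_{k=1}^n η_k)/n − 𝔼η_1| > δ ) ≤ 4 Var(η_1)/(δ² m)`. -/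
lemma integrable_mul_of_memℒp_two {Ω : Type*} [MeasureSpace Ω]
    [IsProbabilityMeasure (ℙ : Measure Ω)] {f g : Ω → ℝ}
    (hf : MemLp f 2 ℙ) (hg : MemLp g 2 ℙ) : Integrable (f * g) ℙ := by
  refine Integrable.mono' ((hf.integrable_sq.add hg.integrable_sq).div_const 2)
    (hf.aestronglyMeasurable.mul hg.aestronglyMeasurable) ?_
  refine Eventually.of_forall fun ω => ?_
  have h1 : ‖f ω * g ω‖ = |f ω| * |g ω| := by rw [Real.norm_eq_abs, abs_mul]
  have h2 : |f ω| ^ 2 = f ω ^ 2 := sq_abs _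
  have h3 : |g ω| ^ 2 = g ω ^ 2 := sq_abs _
  simp only [Pi.mul_apply, Pi.add_apply]
  nlinarith [sq_nonneg (|f ω| - |g ω|), abs_nonneg (f ω), abs_nonneg (g ω)]

/-- Kolmogorov's maximal inequality, via Doob's maximal inequality. -/
lemma kolmogorov_max_ineq {Ω : Type*} [MeasureSpace Ω]
    [IsProbabilityMeasure (ℙ : Measure Ω)] (ξ : ℕ → Ω → ℝ)
    (hmeas : ∀ k, Measurable (ξ k))
    (hindep : iIndepFun ξ ℙ)
    (hL2 : ∀ k, MemLp (ξ k) 2 ℙ) (hmean : ∀ k, ∫ x, ξ k x ∂ℙ = 0)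
    (N : ℕ) (ε : ℝ) (hε : 0 < ε) :
    ℙ {ω | ∃ k ≤ N, ε ≤ |∑ j ∈ Finset.range (k + 1), ξ j ω|} ≤
      ENNReal.ofReal ((∑ k ∈ Finset.range (N + 1), variance (ξ k) ℙ) / ε ^ 2) := by
  classical
  set T : ℕ → Ω → ℝ := fun n ω => ∑ j ∈ Finset.range (n + 1), ξ j ω with hT
  have hsm : ∀ i, StronglyMeasurable (ξ i) := fun i => (hmeas i).stronglyMeasurable
  set ℱ := Filtration.natural ξ hsm with hℱ
  have hTmem : ∀ n, MemLp (T n) 2 ℙ := fun n =>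
    memLp_finset_sum (Finset.range (n + 1)) fun i _ => hL2 i
  have hTint : ∀ n, Integrable (T n) ℙ := fun n => (hTmem n).integrable one_le_two
  have hTsq : ∀ n, Integrable (fun ω => T n ω ^ 2) ℙ := fun n => (hTmem n).integrable_sq
  have hadp : StronglyAdapted ℱ T := by
    intro n
    refine Finset.stronglyMeasurable_fun_sum _ fun j hj => ?_
    exact (Filtration.stronglyAdapted_natural hsm j).mono
      (ℱ.mono (Finset.mem_range_succ_iff.mp hj))
  have hadp2 : StronglyAdapted ℱ fun n ω => T n ω ^ 2 := fun n => by
    simpa [pow_two, Pi.mul_def] using (hadp n).mul (hadp n)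
  have hcondξ : ∀ i : ℕ, (ℙ[ξ (i + 1)|ℱ i]) =ᵐ[ℙ] fun _ => 0 := by
    intro i
    have h := hindep.condExp_natural_ae_eq_of_lt hsm (Nat.lt_succ_self i)
    simpa [hmean (i + 1)] using h
  have hsub : Submartingale (fun n ω => T n ω ^ 2) ℱ ℙ := by
    refine submartingale_nat hadp2 (fun n => hTsq n) fun i => ?_
    have hint1 : Integrable (fun ω => T i ω ^ 2) ℙ := hTsq i
    have hint2 : Integrable ((fun ω => 2 * T i ω) * ξ (i + 1)) ℙ :=
      integrable_mul_of_memℒp_two ((hTmem i).const_mul 2) (hL2 (i + 1))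
    have hint3 : Integrable (fun ω => ξ (i + 1) ω ^ 2) ℙ := (hL2 (i + 1)).integrable_sq
    have hdecomp : (fun ω => T (i + 1) ω ^ 2) =
        (fun ω => T i ω ^ 2) + ((fun ω => 2 * T i ω) * ξ (i + 1)) +
          fun ω => ξ (i + 1) ω ^ 2 := by
      funext ω
      simp only [Pi.add_apply, Pi.mul_apply, hT]
      rw [Finset.sum_range_succ]
      ring
    have h1 : (ℙ[fun ω => T (i + 1) ω ^ 2|ℱ i]) =ᵐ[ℙ]
        (ℙ[fun ω => T i ω ^ 2|ℱ i]) + (ℙ[(fun ω => 2 * T i ω) * ξ (i + 1)|ℱ i]) +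
          (ℙ[fun ω => ξ (i + 1) ω ^ 2|ℱ i]) := by
      rw [hdecomp]
      exact (condExp_add (hint1.add hint2) hint3 _).trans
        ((condExp_add hint1 hint2 _).add (EventuallyEq.refl _ _))
    have hA : (ℙ[fun ω => T i ω ^ 2|ℱ i]) = fun ω => T i ω ^ 2 :=
      condExp_of_stronglyMeasurable (ℱ.le i) (hadp2 i) hint1
    have hB : (ℙ[(fun ω => 2 * T i ω) * ξ (i + 1)|ℱ i]) =ᵐ[ℙ]
        (fun ω => 2 * T i ω) * (ℙ[ξ (i + 1)|ℱ i]) :=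
      condExp_mul_of_stronglyMeasurable_left ((hadp i).const_mul 2) hint2
        ((hL2 (i + 1)).integrable one_le_two)
    have hC : (ℙ[fun ω => ξ (i + 1) ω ^ 2|ℱ i]) =ᵐ[ℙ]
        fun _ => ∫ ω, ξ (i + 1) ω ^ 2 ∂ℙ := by
      have hm1 : Measurable[MeasurableSpace.comap (ξ (i + 1)) inferInstance] (ξ (i + 1)) :=
        Measurable.of_comap_le le_rfl
      exact condExp_indep_eq (hmeas (i + 1)).comap_le (ℱ.le i)
        ((hm1.pow_const 2).stronglyMeasurable)
        (hindep.indep_comap_natural_of_lt hsm (Nat.lt_succ_self i))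
    filter_upwards [h1, hB, hC, hcondξ i] with ω e1 e2 e3 e4
    rw [e1]
    simp only [Pi.add_apply, Pi.mul_apply, hA] at e2 e3 ⊢
    rw [e2, e3, e4]
    have : (0 : ℝ) ≤ ∫ ω, ξ (i + 1) ω ^ 2 ∂ℙ := integral_nonneg fun ω => sq_nonneg _
    nlinarith
  -- Doob's maximal inequality
  set εn : NNReal := (ε ^ 2).toNNReal with hεn
  have hεnc : (εn : ℝ) = ε ^ 2 := Real.coe_toNNReal _ (sq_nonneg ε)
  have hmax := maximal_ineq hsub (fun n ω => sq_nonneg (T n ω)) (ε := εn) N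
  set D := {ω | (εn : ℝ) ≤
    (Finset.range (N + 1)).sup' Finset.nonempty_range_add_one fun k => T k ω ^ 2} with hD
  have hsubset : {ω | ∃ k ≤ N, ε ≤ |∑ j ∈ Finset.range (k + 1), ξ j ω|} ⊆ D := by
    rintro ω ⟨k, hk, hineq⟩
    rw [hD, Set.mem_setOf_eq, Finset.le_sup'_iff]
    refine ⟨k, Finset.mem_range.2 (Nat.lt_succ_of_le hk), ?_⟩
    rw [hεnc, ← sq_abs (T k ω)]
    exact pow_le_pow_left₀ hε.le hineq 2
  -- value of the integral
  have hvar : ∫ ω, T N ω ^ 2 ∂ℙ = ∑ k ∈ Finset.range (N + 1), variance (ξ k) ℙ := by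
    have hsum : variance (∑ i ∈ Finset.range (N + 1), ξ i) ℙ =
        ∑ i ∈ Finset.range (N + 1), variance (ξ i) ℙ :=
      IndepFun.variance_sum (fun i _ => hL2 i)
        (fun i _ j _ hij => hindep.indepFun hij)
    have hTeq : (∑ i ∈ Finset.range (N + 1), ξ i) = T N := by
      funext ω; simp [hT]
    have hmeanT : ∫ ω, T N ω ∂ℙ = 0 := by
      rw [hT]
      simp only
      rw [integral_finset_sum _ fun i _ => (hL2 i).integrable one_le_two]
      simp [hmean]
    have hdef := variance_eq_sub (hTmem N)
    rw [hTeq] at hsum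
    rw [hdef, hmeanT] at hsum
    have : (ℙ[T N ^ 2]) = ∫ ω, T N ω ^ 2 ∂ℙ := rfl
    rw [this] at hsum
    simpa using hsum
  have hstep : ℙ D ≤ ENNReal.ofReal ((∑ k ∈ Finset.range (N + 1), variance (ξ k) ℙ) / ε ^ 2) := by
    have hεpos : (0 : ℝ) < ε ^ 2 := pow_pos hε 2
    rw [ENNReal.ofReal_div_of_pos hεpos]
    rw [ENNReal.le_div_iff_mul_le
      (Or.inl (by simp [ENNReal.ofReal_pos, hεpos, hε.ne'])) (Or.inl ENNReal.ofReal_ne_top)]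
    have h1 : ENNReal.ofReal (ε ^ 2) = (εn : ENNReal) := by
      rw [hεn]; rfl
    rw [h1, mul_comm]
    refine le_trans hmax ?_
    rw [← hvar]
    exact ENNReal.ofReal_le_ofReal
      (setIntegral_le_integral (hTsq N) (Eventually.of_forall fun ω => sq_nonneg _))
  exact le_trans (measure_mono hsubset) hstep

theorem prob_sup_avg_deviation_le {Ω : Type*} [MeasureSpace Ω]
    [IsProbabilityMeasure (ℙ : Measure Ω)] (η : ℕ → Ω → ℝ)
    (hmeas : ∀ k, Measurable (η k))
    (hindep : iIndepFun η ℙ)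
    (hident : ∀ k, Measure.map (η k) ℙ = Measure.map (η 0) ℙ)
    (hL2 : MemLp (η 0) 2 ℙ)
    (δ : ℝ) (hδ : 0 < δ) (m : ℕ) (hm : 1 ≤ m) :
    ℙ {ω | ∃ n, m ≤ n ∧
        δ < |(∑ k ∈ Finset.range n, η k ω) / (n : ℝ) - ∫ x, η 0 x ∂ℙ|} ≤
      ENNReal.ofReal (4 * variance (η 0) ℙ / (δ ^ 2 * m)) := by
  classical
  set μ0 := ∫ x, η 0 x ∂ℙ with hμ0
  set ξ : ℕ → Ω → ℝ := fun k ω => η k ω - μ0 with hξ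
  have hmeasξ : ∀ k, Measurable (ξ k) := fun k => (hmeas k).sub measurable_const
  have hid : ∀ k, IdentDistrib (η k) (η 0) ℙ ℙ := fun k =>
    ⟨(hmeas k).aemeasurable, (hmeas 0).aemeasurable, hident k⟩
  have hL2k : ∀ k, MemLp (η k) 2 ℙ := fun k => (hid k).symm.memLp_snd hL2
  have hL2ξ : ∀ k, MemLp (ξ k) 2 ℙ := fun k => (hL2k k).sub (memLp_const μ0)
  have hintk : ∀ k, Integrable (η k) ℙ := fun k => (hL2k k).integrable one_le_two
  have hmeanξ : ∀ k, ∫ x, ξ k x ∂ℙ = 0 := fun k => by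
    rw [hξ]
    simp only
    rw [integral_sub (hintk k) (integrable_const _), (hid k).integral_eq, integral_const]
    simp [hμ0]
  have hindepξ : iIndepFun ξ ℙ :=
    hindep.comp (fun _ x => x - μ0) fun _ => measurable_id.sub measurable_const
  -- variance of the centered variables
  have hvar0 : variance (ξ 0) ℙ = variance (η 0) ℙ := by
    have hY : MemLp (ξ 0) 2 ℙ := hL2ξ 0
    have hmean0 : ∫ x, ξ 0 x ∂ℙ = 0 := hmeanξ 0
    rw [variance_eq_integral hY.aemeasurable, variance_eq_integral hL2.aemeasurable]
    congr 1
    funext ω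
    simp only [Pi.pow_apply, Pi.sub_apply, hξ]
    rw [hmean0]
    ring_nf
    rw [hμ0]
  have hvarξ : ∀ k, variance (ξ k) ℙ = variance (η 0) ℙ := fun k => by
    have h1 : IdentDistrib (ξ k) (ξ 0) ℙ ℙ :=
      (hid k).comp (measurable_id.sub measurable_const)
    rw [h1.variance_eq, hvar0]
  set σ2 := variance (η 0) ℙ with hσ2
  have hσ2nonneg : 0 ≤ σ2 := variance_nonneg _ _
  have hmR : (1 : ℝ) ≤ (m : ℝ) := by exact_mod_cast hm
  have hmRpos : (0 : ℝ) < (m : ℝ) := lt_of_lt_of_le one_pos hmR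
  -- blocks
  set A : ℕ → Set Ω := fun j =>
    {ω | ∃ k ≤ m * 2 ^ (j + 1) - 1,
      δ * ((m : ℝ) * 2 ^ j) ≤ |∑ i ∈ Finset.range (k + 1), ξ i ω|} with hA
  have hincl : {ω | ∃ n, m ≤ n ∧
      δ < |(∑ k ∈ Finset.range n, η k ω) / (n : ℝ) - μ0|} ⊆ ⋃ j, A j := by
    rintro ω ⟨n, hmn, hδn⟩
    have hn1 : 1 ≤ n := le_trans hm hmn
    have hnpos : (0 : ℝ) < (n : ℝ) := by exact_mod_cast hn1
    -- rewrite the average in terms of ξ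
    have hsum : (∑ k ∈ Finset.range n, η k ω)
        = (∑ k ∈ Finset.range n, ξ k ω) + (n : ℝ) * μ0 := by
      rw [hξ]
      simp only
      simp only [Finset.sum_sub_distrib, Finset.sum_const, Finset.card_range, nsmul_eq_mul]
      ring
    have havg : (∑ k ∈ Finset.range n, η k ω) / (n : ℝ) - μ0
        = (∑ k ∈ Finset.range n, ξ k ω) / (n : ℝ) := by
      rw [hsum, add_div, mul_div_assoc]
      field_simp
      ring
    rw [havg] at hδn
    have habs : δ * (n : ℝ) < |∑ k ∈ Finset.range n, ξ k ω| := by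
      rw [abs_div, abs_of_pos hnpos, lt_div_iff₀ hnpos] at hδn
      linarith [hδn]
    -- choose the dyadic block
    set j := Nat.log 2 (n / m) with hj
    have hnm1 : 1 ≤ n / m := (Nat.one_le_div_iff (lt_of_lt_of_le one_pos hm)).2 hmn
    have h1 : m * 2 ^ j ≤ n := by
      have h2j : 2 ^ j ≤ n / m := Nat.pow_log_le_self 2 (by omega)
      calc m * 2 ^ j ≤ m * (n / m) := Nat.mul_le_mul_left m h2j
        _ ≤ n := Nat.mul_div_le n m
    have h2 : n < m * 2 ^ (j + 1) := by
      have := Nat.lt_pow_succ_log_self (b := 2) (by norm_num) (n / m)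
      have := (Nat.div_lt_iff_lt_mul (lt_of_lt_of_le one_pos hm)).1 this
      calc n < 2 ^ (j + 1) * m := this
        _ = m * 2 ^ (j + 1) := mul_comm _ _
    refine Set.mem_iUnion.2 ⟨j, ?_⟩
    refine ⟨n - 1, by omega, ?_⟩
    have hk1 : n - 1 + 1 = n := by omega
    rw [hk1]
    refine le_trans ?_ habs.le
    have : ((m : ℝ) * 2 ^ j) ≤ (n : ℝ) := by
      have : ((m * 2 ^ j : ℕ) : ℝ) ≤ (n : ℝ) := by exact_mod_cast h1
      push_cast at this
      linarith
    nlinarith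
  -- apply Kolmogorov per block
  have hblock : ∀ j : ℕ, ℙ (A j) ≤
      ENNReal.ofReal ((2 * σ2 / (δ ^ 2 * m)) * (1 / 2) ^ j) := by
    intro j
    have hεpos : 0 < δ * ((m : ℝ) * 2 ^ j) := by positivity
    have h := kolmogorov_max_ineq ξ hmeasξ hindepξ hL2ξ hmeanξ
      (m * 2 ^ (j + 1) - 1) (δ * ((m : ℝ) * 2 ^ j)) hεpos
    refine le_trans h (le_of_eq ?_)
    congr 1
    have hNsucc : m * 2 ^ (j + 1) - 1 + 1 = m * 2 ^ (j + 1) := by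
      have : 0 < m * 2 ^ (j + 1) := Nat.mul_pos (by omega) (pow_pos (by norm_num) _)
      omega
    rw [hNsucc]
    rw [Finset.sum_congr rfl fun k _ => hvarξ k, Finset.sum_const, Finset.card_range,
      nsmul_eq_mul]
    push_cast [pow_succ]
    simp only [one_div, inv_pow]
    field_simp
  calc ℙ {ω | ∃ n, m ≤ n ∧
        δ < |(∑ k ∈ Finset.range n, η k ω) / (n : ℝ) - μ0|}
      ≤ ℙ (⋃ j, A j) := measure_mono hincl
    _ ≤ ∑' j, ℙ (A j) := measure_iUnion_le _
    _ ≤ ∑' j, ENNReal.ofReal ((2 * σ2 / (δ ^ 2 * m)) * (1 / 2) ^ j) :=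
        ENNReal.tsum_le_tsum hblock
    _ = ENNReal.ofReal (∑' j : ℕ, (2 * σ2 / (δ ^ 2 * m)) * (1 / 2) ^ j) := by
        rw [ENNReal.ofReal_tsum_of_nonneg (fun j => by positivity)
          (summable_geometric_two.mul_left _)]
    _ = ENNReal.ofReal (4 * σ2 / (δ ^ 2 * m)) := by
        rw [tsum_mul_left, tsum_geometric_two]
        congr 1
        ring
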